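/- arXiv:2410.00019 — 4 statements merged into one kernel-verified Lean document; each statement's English description precedes it below -/
import Mathlib

section
/- For every natural number n and q > 0, the Elzaki transform of τ^n equals n!·q^{n+2}. -/
open Real MeasureTheory

/-- The Elzaki transform of `τ^n` is `n!·q^{n+2}`. -/
theorem elzaki_of_pow (n : ℕ) (q : ℝ) (hq : 0 < q) :
    q * ∫ τ in Set.Ioi (0 : ℝ), τ ^ n * Real.exp (-τ / q)
      = (n.factorial : ℝ) * q ^ (n + 2) := by
  have h := Real.integral_rpow_mul_exp_neg_mul_Ioi
    (a := (n : ℝ) + 1) (r := 1 / q) (by positivity) (by positivity)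
  have heq : ∫ τ in Set.Ioi (0 : ℝ), τ ^ n * Real.exp (-τ / q)
      = ∫ t in Set.Ioi (0 : ℝ), t ^ ((n : ℝ) + 1 - 1) * Real.exp (-(1 / q * t)) := by
    refine setIntegral_congr_fun measurableSet_Ioi fun t ht => ?_
    rw [add_sub_cancel_right, Real.rpow_natCast]
    ring_nf
  rw [heq, h, one_div_one_div, Real.Gamma_nat_eq_factorial n,
    show ((n : ℝ) + 1) = ((n + 1 : ℕ) : ℝ) by push_cast; ring, Real.rpow_natCast]
  ring
end

section
/- If f is differentiable with f and f' of exponential order, then for q > 0, E[f'](q) = (1/q)·E[f](q) − q·f(0). -/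
open Real MeasureTheory

lemma elzaki_aux_integrable (h : ℝ → ℝ) (q G c : ℝ) (hq : 0 < q) (hc : c < 1 / q)
    (hcont : Continuous h) (hb : ∀ τ, 0 ≤ τ → |h τ| ≤ G * Real.exp (c * τ)) :
    IntegrableOn (fun τ => h τ * Real.exp (-τ / q)) (Set.Ioi (0 : ℝ)) := by
  have hb' : (0 : ℝ) < 1 / q - c := by linarith
  have hint : IntegrableOn (fun τ => G * Real.exp (-(1 / q - c) * τ)) (Set.Ioi (0 : ℝ)) :=
    (exp_neg_integrableOn_Ioi 0 hb').const_mul G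
  refine Integrable.mono hint ((hcont.mul (by continuity)).aestronglyMeasurable) ?_
  filter_upwards [ae_restrict_mem measurableSet_Ioi] with τ hτ
  have hτ0 : (0 : ℝ) ≤ τ := le_of_lt hτ
  have h1 : |h τ * Real.exp (-τ / q)| = |h τ| * Real.exp (-τ / q) := by
    rw [abs_mul, abs_of_pos (Real.exp_pos _)]
  have h2 : |h τ| * Real.exp (-τ / q) ≤ G * Real.exp (c * τ) * Real.exp (-τ / q) :=
    mul_le_mul_of_nonneg_right (hb τ hτ0) (Real.exp_pos _).le
  have hG : 0 ≤ G := by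
    have h1 := (abs_nonneg (h 0)).trans (hb 0 le_rfl)
    simpa using h1
  calc ‖h τ * Real.exp (-τ / q)‖ = |h τ| * Real.exp (-τ / q) := h1
    _ ≤ G * Real.exp (c * τ) * Real.exp (-τ / q) := h2
    _ = G * Real.exp (-(1 / q - c) * τ) := by
        rw [mul_assoc, ← Real.exp_add]; ring_nf
    _ ≤ ‖G * Real.exp (-(1 / q - c) * τ)‖ := le_abs_self _

lemma elzaki_aux_tendsto (h : ℝ → ℝ) (q G c : ℝ) (hq : 0 < q) (hc : c < 1 / q)
    (hb : ∀ τ, 0 ≤ τ → |h τ| ≤ G * Real.exp (c * τ)) :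
    Filter.Tendsto (fun τ => h τ * Real.exp (-τ / q)) Filter.atTop (nhds 0) := by
  have hb' : (0 : ℝ) < 1 / q - c := by linarith
  have h0 : Filter.Tendsto (fun τ : ℝ => G * Real.exp (-(1 / q - c) * τ))
      Filter.atTop (nhds 0) := by
    rw [show (0:ℝ) = G * 0 by ring]
    exact (Real.tendsto_exp_atBot.comp
      ((Filter.tendsto_const_mul_atBot_of_neg (by linarith)).mpr Filter.tendsto_id)).const_mul G
  refine squeeze_zero_norm' ?_ h0
  filter_upwards [Filter.eventually_ge_atTop (0:ℝ)] with τ hτ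
  have : ‖h τ * Real.exp (-τ / q)‖ = |h τ| * Real.exp (-τ / q) := by
    rw [Real.norm_eq_abs, abs_mul, abs_of_pos (Real.exp_pos _)]
  rw [this]
  calc |h τ| * Real.exp (-τ / q) ≤ G * Real.exp (c * τ) * Real.exp (-τ / q) :=
        mul_le_mul_of_nonneg_right (hb τ hτ) (Real.exp_pos _).le
    _ = G * Real.exp (-(1 / q - c) * τ) := by rw [mul_assoc, ← Real.exp_add]; ring_nf

/-- Elzaki transform of the derivative: `E[f'](q) = (1/q)·E[f](q) − q·f(0)`
for `f` continuously differentiable of exponential order (along with `f'`). -/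
theorem elzaki_of_deriv (f : ℝ → ℝ) (q G c : ℝ) (hq : 0 < q)
    (hdiff : Differentiable ℝ f) (hcont : Continuous (deriv f))
    (hc : c < 1 / q)
    (hf : ∀ τ, 0 ≤ τ → |f τ| ≤ G * Real.exp (c * τ))
    (hf' : ∀ τ, 0 ≤ τ → |deriv f τ| ≤ G * Real.exp (c * τ)) :
    q * ∫ τ in Set.Ioi (0 : ℝ), deriv f τ * Real.exp (-τ / q)
      = (1 / q) * (q * ∫ τ in Set.Ioi (0 : ℝ), f τ * Real.exp (-τ / q)) - q * f 0 := by
  set F : ℝ → ℝ := fun τ => f τ * Real.exp (-τ / q)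
  set g : ℝ → ℝ := fun τ => deriv f τ * Real.exp (-τ / q) - (1 / q) * (f τ * Real.exp (-τ / q))
  have hF : ∀ x ∈ Set.Ici (0:ℝ), HasDerivAt F (g x) x := by
    intro x _
    have h1 : HasDerivAt f (deriv f x) x := (hdiff x).hasDerivAt
    have h2 : HasDerivAt (fun τ : ℝ => Real.exp (-τ / q)) (Real.exp (-x / q) * (-1 / q)) x := by
      have : HasDerivAt (fun τ : ℝ => -τ / q) (-1 / q) x := by
        simpa using ((hasDerivAt_id x).neg.div_const q)
      exact (Real.hasDerivAt_exp _).comp x this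
    have := h1.mul h2
    refine this.congr_deriv ?_
    simp only [g]; ring
  have hint1 : IntegrableOn (fun τ => deriv f τ * Real.exp (-τ / q)) (Set.Ioi (0:ℝ)) :=
    elzaki_aux_integrable _ q G c hq hc hcont hf'
  have hint2 : IntegrableOn (fun τ => f τ * Real.exp (-τ / q)) (Set.Ioi (0:ℝ)) :=
    elzaki_aux_integrable _ q G c hq hc hdiff.continuous hf
  have hgint : IntegrableOn g (Set.Ioi (0:ℝ)) := hint1.sub (hint2.const_mul _)
  have htend : Filter.Tendsto F Filter.atTop (nhds 0) :=
    elzaki_aux_tendsto f q G c hq hc hf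
  have key : ∫ x in Set.Ioi (0:ℝ), g x = 0 - F 0 :=
    integral_Ioi_of_hasDerivAt_of_tendsto' hF hgint htend
  have hsplit : ∫ x in Set.Ioi (0:ℝ), g x
      = (∫ τ in Set.Ioi (0:ℝ), deriv f τ * Real.exp (-τ / q))
        - (1 / q) * ∫ τ in Set.Ioi (0:ℝ), f τ * Real.exp (-τ / q) := by
    rw [integral_sub hint1 (hint2.const_mul _), MeasureTheory.integral_const_mul]
  have hF0 : F 0 = f 0 := by simp [F]
  rw [hsplit, hF0] at key
  have hqne : q ≠ 0 := ne_of_gt hq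
  simp only [F] at key ⊢
  field_simp at key ⊢
  nlinarith [key]
end

section
/- The function w(n,τ) = (1+τ)²·e^{-(1+τ)n} solves the collisional breakage equation ∂w/∂τ = ∫₀^∞∫_n^∞ ερ·(2/ε)·w(ε,τ)w(ρ,τ) dε dρ − ∫₀^∞ nε·w(n,τ)w(ε,τ) dε with initial condition w(n,0) = e^{-n}, for all n > 0 and τ ≥ 0. -/
open Real MeasureTheory Filter Set Topology

lemma expTendstoCBE (a : ℝ) (ha : 0 < a) :
    Tendsto (fun x : ℝ => Real.exp (-(a * x))) atTop (𝓝 0) := by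
  have h1 : Tendsto (fun x : ℝ => a * x) atTop atTop :=
    (tendsto_const_mul_atTop_of_pos ha).2 tendsto_id
  exact Real.tendsto_exp_atBot.comp (tendsto_neg_atBot_iff.2 h1)

lemma intA_CBE (a c : ℝ) (ha : 0 < a) :
    ∫ x in Set.Ioi c, Real.exp (-(a * x)) = Real.exp (-(a * c)) / a := by
  have h := integral_Ioi_of_hasDerivAt_of_nonneg' (a := c)
      (g := fun x => -Real.exp (-(a * x)) / a) (g' := fun x => Real.exp (-(a * x)))
      (l := 0) ?_ ?_ ?_
  · rw [h]; ring
  · intro x _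
    have h1 : HasDerivAt (fun x : ℝ => -(a * x)) (-a) x := by
      simpa [Pi.neg_def] using ((hasDerivAt_id x).const_mul a).neg
    have h2 : HasDerivAt (fun x => -Real.exp (-(a * x)) / a) _ x := (h1.exp.neg.div_const a)
    convert h2 using 1
    field_simp
  · intro x _; positivity
  · simpa using ((expTendstoCBE a ha).neg.div_const a)

lemma intB_CBE (a : ℝ) (ha : 0 < a) :
    ∫ x in Set.Ioi (0:ℝ), x * Real.exp (-(a * x)) = 1 / a ^ 2 := by
  have h := integral_Ioi_of_hasDerivAt_of_nonneg' (a := (0:ℝ))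
      (g := fun x => -(x / a + 1 / a ^ 2) * Real.exp (-(a * x)))
      (g' := fun x => x * Real.exp (-(a * x))) (l := 0) ?_ ?_ ?_
  · rw [h]; simp
  · intro x _
    have h1 : HasDerivAt (fun x : ℝ => -(a * x)) (-a) x := by
      simpa [Pi.neg_def] using ((hasDerivAt_id x).const_mul a).neg
    have h2 : HasDerivAt (fun x : ℝ => -(x / a + 1 / a ^ 2)) (-(1/a)) x := by
      have := (((hasDerivAt_id x).div_const a).add_const (1 / a ^ 2)).neg
      simpa [one_div, Pi.neg_def] using this
    have : HasDerivAt (fun x => -(x / a + 1 / a ^ 2) * Real.exp (-(a * x))) _ x := h2.mul h1.exp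
    convert this using 1
    field_simp
    ring
  · intro x hx; have : (0:ℝ) < x := hx; positivity
  · have hb : Tendsto (fun x : ℝ => x ^ (1:ℝ) * Real.exp (-a * x)) atTop (𝓝 0) :=
      tendsto_rpow_mul_exp_neg_mul_atTop_nhds_zero 1 a ha
    have hx : Tendsto (fun x : ℝ => x * Real.exp (-(a * x))) atTop (𝓝 0) := by
      refine hb.congr' ?_
      filter_upwards [eventually_gt_atTop (0:ℝ)] with x hx
      rw [Real.rpow_one, neg_mul]
    have h1 : Tendsto (fun x : ℝ => -(1/a) * (x * Real.exp (-(a*x))) - (1/a^2) * Real.exp (-(a*x)))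
        atTop (𝓝 (-(1/a) * 0 - (1/a^2) * 0)) :=
      (hx.const_mul _).sub ((expTendstoCBE a ha).const_mul _)
    simp only [mul_zero, sub_zero] at h1
    refine h1.congr (fun x => ?_)
    ring

/-- `w(n,τ) = (1+τ)²·e^{-(1+τ)n}` solves the collisional breakage equation with
collision kernel `μ(n,ε) = nε` and binary breakage kernel `α(n,ε,ρ) = 2/ε`,
with initial condition `w(n,0) = e^{-n}`. -/
theorem exact_solution_CBE
    (w : ℝ → ℝ → ℝ)
    (hw : ∀ n τ, w n τ = (1 + τ) ^ 2 * Real.exp (-(1 + τ) * n)) :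
    (∀ n : ℝ, 0 < n → ∀ τ : ℝ, 0 ≤ τ →
      HasDerivAt (fun t => w n t)
        ((∫ ρ in Set.Ioi (0 : ℝ), ∫ ε in Set.Ioi n,
            ε * ρ * (2 / ε) * w ε τ * w ρ τ)
          - ∫ ε in Set.Ioi (0 : ℝ), n * ε * w n τ * w ε τ) τ) ∧
    (∀ n : ℝ, 0 < n → w n 0 = Real.exp (-n)) := by
  constructor
  · intro n hn τ hτ
    have ha : (0:ℝ) < 1 + τ := by linarith
    -- compute the loss integral
    have e1 : (∫ ε in Set.Ioi (0:ℝ), n * ε * w n τ * w ε τ)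
        = n * (1 + τ) ^ 2 * Real.exp (-((1 + τ) * n)) := by
      rw [setIntegral_congr_fun (f := fun ε => n * ε * w n τ * w ε τ)
          (g := fun ε => (n * (1 + τ) ^ 4 * Real.exp (-((1 + τ) * n)))
              * (ε * Real.exp (-((1 + τ) * ε)))) measurableSet_Ioi ?_,
        MeasureTheory.integral_const_mul, intB_CBE _ ha]
      · field_simp
      · intro ε _
        simp only [hw, neg_mul]
        ring
    -- compute the gain integral
    have e2 : (∫ ρ in Set.Ioi (0:ℝ), ∫ ε in Set.Ioi n, ε * ρ * (2 / ε) * w ε τ * w ρ τ)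
        = 2 * (1 + τ) * Real.exp (-((1 + τ) * n)) := by
      rw [setIntegral_congr_fun (f := fun ρ => ∫ ε in Set.Ioi n, ε * ρ * (2 / ε) * w ε τ * w ρ τ)
          (g := fun ρ => (2 * (1 + τ) ^ 3 * Real.exp (-((1 + τ) * n)))
              * (ρ * Real.exp (-((1 + τ) * ρ)))) measurableSet_Ioi ?_,
        MeasureTheory.integral_const_mul, intB_CBE _ ha]
      · field_simp
      · intro ρ _
        have hinner : (∫ ε in Set.Ioi n, ε * ρ * (2 / ε) * w ε τ * w ρ τ)
            = (2 * ρ * (1 + τ) ^ 4 * Real.exp (-((1 + τ) * ρ)))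
              * (Real.exp (-((1 + τ) * n)) / (1 + τ)) := by
          rw [setIntegral_congr_fun (f := fun ε => ε * ρ * (2 / ε) * w ε τ * w ρ τ)
              (g := fun ε => (2 * ρ * (1 + τ) ^ 4 * Real.exp (-((1 + τ) * ρ)))
                  * Real.exp (-((1 + τ) * ε))) measurableSet_Ioi ?_,
            MeasureTheory.integral_const_mul, intA_CBE _ _ ha]
          intro ε hε
          have hε0 : ε ≠ 0 := ne_of_gt (lt_trans hn hε)
          simp only [hw, neg_mul]
          field_simp
        simp only [hinner]
        field_simp
    -- the derivative
    have h1 : HasDerivAt (fun t : ℝ => 1 + t) 1 τ := (hasDerivAt_id τ).const_add 1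
    have hp : HasDerivAt (fun t : ℝ => (1 + t) ^ 2) (2 * (1 + τ)) τ := by
      simpa [Pi.pow_def] using h1.pow 2
    have hin : HasDerivAt (fun t : ℝ => -(1 + t) * n) (-n) τ := by
      simpa using h1.neg.mul_const n
    have hD : HasDerivAt (fun t => (1 + t) ^ 2 * Real.exp (-(1 + t) * n)) _ τ := hp.mul hin.exp
    rw [show (fun t => w n t) = (fun t => (1 + t) ^ 2 * Real.exp (-(1 + t) * n)) from
      funext fun t => hw n t]
    convert hD using 1
    rw [e1, e2, neg_mul]
    ring
  · intro n _
    rw [hw]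
    norm_num
end

section
/- The series ∑_{k=0}^∞ ((−1)^k/k!)·e^{-n}·τ^k·(n^k − 2k·n^{k−1} + k(k−1)·n^{k−2}) converges to (1+τ)²·e^{-(1+τ)n} for all n > 0 and τ ≥ 0. -/
open Real

lemma real_exp_hasSum (x : ℝ) : HasSum (fun k : ℕ => x ^ k / k.factorial) (Real.exp x) := by
  rw [Real.exp_eq_exp_ℝ]
  exact NormedSpace.expSeries_div_hasSum_exp x

/-- The EPDTM series `∑ₖ ((−1)^k/k!) e^{-n} τ^k (n^k − 2k n^{k−1} + k(k−1) n^{k−2})`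
converges to the exact solution `(1+τ)²·e^{-(1+τ)n}`. -/
theorem epdtm_series_converges (n τ : ℝ) (hn : 0 < n) (hτ : 0 ≤ τ) :
    HasSum
      (fun k : ℕ => ((-1 : ℝ) ^ k / k.factorial) * Real.exp (-n) * τ ^ k
        * (n ^ k - 2 * k * n ^ (k - 1) + k * (k - 1) * n ^ (k - 2)))
      ((1 + τ) ^ 2 * Real.exp (-(1 + τ) * n)) := by
  set e := Real.exp (-n) with he
  set E := Real.exp (-τ * n) with hEdef
  have hbase : HasSum (fun k : ℕ => (-τ * n) ^ k / k.factorial) E := real_exp_hasSum _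
  have hp : ∀ k : ℕ, (-τ * n) ^ k = (-1 : ℝ) ^ k * (τ ^ k * n ^ k) := by
    intro k
    rw [show -τ * n = -1 * (τ * n) by ring, mul_pow, mul_pow]
  have hA : HasSum (fun k : ℕ => ((-1 : ℝ) ^ k / k.factorial) * e * τ ^ k * n ^ k)
      (e * E) := by
    convert hbase.mul_left e using 1
    rfl
    funext k
    rw [hp]
    ring
  have hB : HasSum (fun k : ℕ => -(((-1 : ℝ) ^ k / k.factorial) * e * τ ^ k
      * (2 * k * n ^ (k - 1)))) (2 * τ * e * E) := by
    rw [← hasSum_nat_add_iff' 1]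
    simp only [Finset.range_one, Finset.sum_singleton, Nat.cast_zero, mul_zero, zero_mul,
      neg_zero, sub_zero]
    convert (hbase.mul_left (2 * τ * e)) using 1
    rfl
    funext k
    simp only [Nat.add_sub_cancel, Nat.factorial_succ, pow_succ, hp, Nat.cast_mul, Nat.cast_add, Nat.cast_one]
    have hk : ((k : ℝ) + 1) ≠ 0 := by positivity
    have hf : (k.factorial : ℝ) ≠ 0 := Nat.cast_ne_zero.2 k.factorial_ne_zero
    field_simp
  have hC : HasSum (fun k : ℕ => ((-1 : ℝ) ^ k / k.factorial) * e * τ ^ k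
      * (k * (k - 1) * n ^ (k - 2))) (τ ^ 2 * e * E) := by
    rw [← hasSum_nat_add_iff' 2]
    have h01 : (∑ i ∈ Finset.range 2, ((-1 : ℝ) ^ i / i.factorial) * e * τ ^ i
        * (i * (i - 1) * n ^ (i - 2))) = 0 := by
      simp [Finset.sum_range_succ]
    rw [h01, sub_zero]
    convert (hbase.mul_left (τ ^ 2 * e)) using 1
    rfl
    funext k
    have hf : ((k + 2).factorial : ℝ) = ((k : ℝ) + 2) * (((k : ℝ) + 1) * k.factorial) := by
      push_cast [Nat.factorial_succ]
      ring
    simp only [Nat.add_sub_cancel, hf, hp]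
    have hk2 : ((k : ℝ) + 2) ≠ 0 := by positivity
    have hk1 : ((k : ℝ) + 1) ≠ 0 := by positivity
    push_cast
    field_simp
    ring
  have hsum := (hA.add hB).add hC
  have hE : e * E = Real.exp (-(1 + τ) * n) := by
    rw [he, hEdef, ← Real.exp_add]; ring_nf
  convert hsum using 1
  · funext k; ring
  · rw [← hE]; ring
end
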